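/- Let 𝒟 ⊂ ℝ² (the set of all parameter pairs (θ, τ)) and 𝒳 ⊂ ℝ^e be compact, with 𝒟 of finite Lebesgue measure m(𝒟). Let h(θ|τ), π(τ), and g(x|θ) be bounded continuous nonnegative functions such that p(θ, τ) = h(θ|τ) π(τ) is a probability density on 𝒟 (∫_𝒟 p = 1), and assume the Bayes factor q(x) = ∬_𝒟 p(θ, τ) g(x|θ) dτ dθ is strictly positive for every x ∈ 𝒳; set f(θ, τ|x) = p(θ,τ) g(x|θ) / q(x). Then for every ε > 0 there exist δ_p > 0 and δ_g > 0 such that: for all measurable P : 𝒟 → ℝ and G : 𝒳 × 𝒟 → ℝ with sup_{θ,τ} |P(θ,τ) − p(θ,τ)| < δ_p and sup_{x,θ} |G(x|θ) − g(x|θ)| < δ_g, the quantity Q(x) = ∬_𝒟 P(θ,τ) G(x|θ) dτ dθ is nonzero for all x and the approximator F(θ, τ|x) = P(θ,τ) G(x|θ) / Q(x) satisfies |F(θ,τ|x) − f(θ,τ|x)| < ε for all x ∈ 𝒳 and all (θ, τ) ∈ 𝒟. (Extended Bayesian Approximation Theorem.) -/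

import Mathlib

open MeasureTheory

set_option maxHeartbeats 1600000 in
/-- **Extended Bayesian Approximation Theorem.**
On the compact set `D ⊂ ℝ²` of parameter pairs `(θ, τ)` and the compact data set
`X`, uniform approximators `P` of the joint prior `p(θ,τ) = h(θ|τ)π(τ)` and `G` of
the likelihood `g(x|θ)` yield a uniform approximator
`F(θ,τ|x) = P(θ,τ)G(x|θ)/∬_D P G` of the hierarchical posterior
`f(θ,τ|x) = p(θ,τ)g(x|θ)/∬_D p g`. -/
theorem extended_bayesian_approximation_theorem
    (e : ℕ) (D : Set (ℝ × ℝ)) (X : Set (Fin e → ℝ))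
    (hDc : IsCompact D) (hXc : IsCompact X) (hDm : MeasurableSet D)
    (h : ℝ × ℝ → ℝ) (pr : ℝ → ℝ) (g : (Fin e → ℝ) → ℝ → ℝ)
    (p : ℝ × ℝ → ℝ) (hp : ∀ θτ, p θτ = h θτ * pr θτ.2)
    (hh_cont : ContinuousOn h D)
    (hpr_cont : ContinuousOn (fun θτ : ℝ × ℝ => pr θτ.2) D)
    (hg_cont : ContinuousOn
      (fun q : (Fin e → ℝ) × (ℝ × ℝ) => g q.1 q.2.1) (X ×ˢ D))
    (hh_bdd : ∃ C, ∀ θτ ∈ D, |h θτ| ≤ C)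
    (hpr_bdd : ∃ C, ∀ θτ ∈ D, |pr θτ.2| ≤ C)
    (hg_bdd : ∃ C, ∀ x ∈ X, ∀ θτ ∈ D, |g x θτ.1| ≤ C)
    (hh_nonneg : ∀ θτ ∈ D, 0 ≤ h θτ)
    (hpr_nonneg : ∀ θτ ∈ D, 0 ≤ pr θτ.2)
    (hg_nonneg : ∀ x ∈ X, ∀ θτ ∈ D, 0 ≤ g x θτ.1)
    (hp_prob : (∫ θτ in D, p θτ) = 1)
    (hq_pos : ∀ x ∈ X, 0 < ∫ θτ in D, p θτ * g x θτ.1) :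
    ∀ ε > 0, ∃ δp > 0, ∃ δg > 0,
      ∀ (P : ℝ × ℝ → ℝ) (G : (Fin e → ℝ) → ℝ → ℝ),
        Measurable P →
        Measurable (fun q : (Fin e → ℝ) × ℝ => G q.1 q.2) →
        (∀ θτ ∈ D, |P θτ - p θτ| < δp) →
        (∀ x ∈ X, ∀ θτ ∈ D, |G x θτ.1 - g x θτ.1| < δg) →
        (∀ x ∈ X, (∫ θτ in D, P θτ * G x θτ.1) ≠ 0) ∧
        (∀ x ∈ X, ∀ θτ ∈ D,
          |P θτ * G x θτ.1 / (∫ u in D, P u * G x u.1) -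
            p θτ * g x θτ.1 / (∫ u in D, p u * g x u.1)| < ε) := by
  intro ε hε
  rcases X.eq_empty_or_nonempty with hXe | hXne
  · refine ⟨1, one_pos, 1, one_pos, fun P G _ _ _ _ => ?_⟩
    subst hXe
    exact ⟨fun x hx => absurd hx (Set.notMem_empty x),
      fun x hx => absurd hx (Set.notMem_empty x)⟩
  -- notation
  set q : (Fin e → ℝ) → ℝ := fun x => ∫ θτ in D, p θτ * g x θτ.1 with hq_def
  -- bounds
  obtain ⟨Ch, hCh⟩ := hh_bdd
  obtain ⟨Cpr, hCpr⟩ := hpr_bdd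
  obtain ⟨Cg0, hCg0⟩ := hg_bdd
  set Cp : ℝ := max Ch 0 * max Cpr 0 with hCp_def
  set Cg : ℝ := max Cg0 0 with hCg_def
  have hCp0 : 0 ≤ Cp := mul_nonneg (le_max_right _ _) (le_max_right _ _)
  have hCg0' : 0 ≤ Cg := le_max_right _ _
  have hCp : ∀ θτ ∈ D, |p θτ| ≤ Cp := by
    intro θτ hθτ
    rw [hp θτ, abs_mul]
    exact mul_le_mul (le_trans (hCh θτ hθτ) (le_max_left _ _))
      (le_trans (hCpr θτ hθτ) (le_max_left _ _)) (abs_nonneg _)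
      (le_max_right _ _)
  have hCg : ∀ x ∈ X, ∀ θτ ∈ D, |g x θτ.1| ≤ Cg := fun x hx θτ hθτ =>
    le_trans (hCg0 x hx θτ hθτ) (le_max_left _ _)
  -- measure of D
  set M : ℝ := (volume D).toReal with hM_def
  have hM0 : 0 ≤ M := ENNReal.toReal_nonneg
  have hDfin : volume D < ⊤ := hDc.measure_lt_top
  -- continuity facts
  have hp_cont : ContinuousOn p D := by
    have : ContinuousOn (fun θτ : ℝ × ℝ => h θτ * pr θτ.2) D :=
      hh_cont.mul hpr_cont
    exact this.congr fun θτ _ => hp θτ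
  have hgx_cont : ∀ x ∈ X, ContinuousOn (fun θτ : ℝ × ℝ => g x θτ.1) D := by
    intro x hx
    have hmap : Set.MapsTo (fun θτ : ℝ × ℝ => ((x, θτ) : (Fin e → ℝ) × (ℝ × ℝ)))
        D (X ×ˢ D) := fun θτ hθτ => ⟨hx, hθτ⟩
    exact hg_cont.comp ((continuous_const.prodMk continuous_id).continuousOn) hmap
  have hpg_int : ∀ x ∈ X, IntegrableOn (fun θτ => p θτ * g x θτ.1) D := by
    intro x hx
    exact (hp_cont.mul (hgx_cont x hx)).integrableOn_compact hDc
  have hp_int : IntegrableOn p D := hp_cont.integrableOn_compact hDc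
  -- continuity of q on X
  have hq_cont : ContinuousOn q X := by
    intro x hx
    rw [Metric.continuousWithinAt_iff]
    intro ε' hε'
    set ε'' : ℝ := ε' / (2 * (Cp * M + 1)) with hε''_def
    have hden : (0:ℝ) < Cp * M + 1 := by positivity
    have hε''pos : 0 < ε'' := by positivity
    have hu := (hXc.prod hDc).uniformContinuousOn_of_continuous hg_cont
    obtain ⟨δ', hδ', hu⟩ := Metric.uniformContinuousOn_iff.mp hu ε'' hε''pos
    refine ⟨δ', hδ', fun {y} hy hdy => ?_⟩
    have key : ∀ θτ ∈ D, |g y θτ.1 - g x θτ.1| ≤ ε'' := by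
      intro θτ hθτ
      have h1 : dist ((y, θτ) : (Fin e → ℝ) × (ℝ × ℝ)) (x, θτ) < δ' := by
        rw [Prod.dist_eq]
        simp only [dist_self]
        rw [max_eq_left dist_nonneg]
        exact hdy
      have := hu (y, θτ) ⟨hy, hθτ⟩ (x, θτ) ⟨hx, hθτ⟩ h1
      rw [Real.dist_eq] at this
      exact le_of_lt this
    have hint_y := hpg_int y hy
    have hint_x := hpg_int x hx
    have heq : q y - q x = ∫ θτ in D, (p θτ * g y θτ.1 - p θτ * g x θτ.1) := by
      rw [hq_def]
      exact (integral_sub hint_y hint_x).symm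
    have hb : |q y - q x| ≤ Cp * ε'' * M := by
      rw [heq, ← Real.norm_eq_abs]
      refine norm_setIntegral_le_of_norm_le_const (μ := volume) (s := D) hDfin (fun θτ hθτ => ?_)
      rw [Real.norm_eq_abs]
      have hrw : p θτ * g y θτ.1 - p θτ * g x θτ.1
          = p θτ * (g y θτ.1 - g x θτ.1) := by ring
      rw [hrw, abs_mul]
      exact mul_le_mul (hCp θτ hθτ) (key θτ hθτ) (abs_nonneg _) hCp0
    rw [Real.dist_eq]
    have hid : ε'' * (2 * (Cp * M + 1)) = ε' := by
      rw [hε''_def]; field_simp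
    have hfin : Cp * ε'' * M ≤ ε' / 2 := by
      nlinarith [hε''pos.le, mul_nonneg hCp0 hM0]
    calc |q y - q x| ≤ Cp * ε'' * M := hb
      _ ≤ ε' / 2 := hfin
      _ < ε' := by linarith
  -- minimum of q on X
  obtain ⟨x₀, hx₀X, hx₀min⟩ := hXc.exists_isMinOn hXne hq_cont
  set q₀ : ℝ := q x₀ with hq₀_def
  have hq₀pos : 0 < q₀ := hq_pos x₀ hx₀X
  have hq₀le : ∀ x ∈ X, q₀ ≤ ∫ θτ in D, p θτ * g x θτ.1 := fun x hx => hx₀min hx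
  clear_value q₀
  clear hx₀min hq₀_def
  -- constants for the choice of δ
  set B : ℝ := Cg + Cp + 1 with hB_def
  have hBpos : 0 < B := by rw [hB_def]; positivity
  set K : ℝ := 2 / q₀ * (1 + Cp * Cg * M / q₀) with hK_def
  have hKpos : 0 < K := by
    rw [hK_def]
    exact mul_pos (div_pos two_pos hq₀pos)
      (add_pos_of_pos_of_nonneg one_pos
        (div_nonneg (mul_nonneg (mul_nonneg hCp0 hCg0') hM0) hq₀pos.le))
  clear_value B K
  have hM1 : (0:ℝ) < M + 1 := by linarith
  have hK1 : (0:ℝ) < K + 1 := by linarith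
  set δ : ℝ := min 1 (min (q₀ / (2 * (M + 1) * B)) (ε / (2 * (K + 1) * B)))
    with hδ_def
  have hδpos : 0 < δ := by
    rw [hδ_def]
    exact lt_min one_pos (lt_min
      (div_pos hq₀pos (mul_pos (mul_pos two_pos hM1) hBpos))
      (div_pos hε (mul_pos (mul_pos two_pos hK1) hBpos)))
  have hδ1 : δ ≤ 1 := min_le_left _ _
  have hδ2 : δ ≤ q₀ / (2 * (M + 1) * B) := le_trans (min_le_right _ _) (min_le_left _ _)
  have hδ3 : δ ≤ ε / (2 * (K + 1) * B) := le_trans (min_le_right _ _) (min_le_right _ _)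
  clear_value δ
  refine ⟨δ, hδpos, δ, hδpos, fun P G hPm hGm hPa hGa => ?_⟩
  -- pointwise bound on |PG - pg|
  have key : ∀ x ∈ X, ∀ θτ ∈ D, |P θτ * G x θτ.1 - p θτ * g x θτ.1| ≤ δ * B := by
    intro x hx θτ hθτ
    have h1 : |P θτ - p θτ| ≤ δ := le_of_lt (hPa θτ hθτ)
    have h2 : |G x θτ.1 - g x θτ.1| ≤ δ := le_of_lt (hGa x hx θτ hθτ)
    have h3 : |p θτ| ≤ Cp := hCp θτ hθτ
    have h4 : |g x θτ.1| ≤ Cg := hCg x hx θτ hθτ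
    have h5 : |G x θτ.1| ≤ Cg + 1 := by
      calc |G x θτ.1| = |g x θτ.1 + (G x θτ.1 - g x θτ.1)| := by ring_nf
        _ ≤ |g x θτ.1| + |G x θτ.1 - g x θτ.1| := abs_add_le _ _
        _ ≤ Cg + 1 := add_le_add h4 (le_trans h2 hδ1)
    have hrw : P θτ * G x θτ.1 - p θτ * g x θτ.1
        = (P θτ - p θτ) * G x θτ.1 + p θτ * (G x θτ.1 - g x θτ.1) := by ring
    calc |P θτ * G x θτ.1 - p θτ * g x θτ.1|
        ≤ |(P θτ - p θτ) * G x θτ.1| + |p θτ * (G x θτ.1 - g x θτ.1)| := by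
          rw [hrw]; exact abs_add_le _ _
      _ = |P θτ - p θτ| * |G x θτ.1| + |p θτ| * |G x θτ.1 - g x θτ.1| := by
          rw [abs_mul, abs_mul]
      _ ≤ δ * (Cg + 1) + Cp * δ := add_le_add
          (mul_le_mul h1 h5 (abs_nonneg _) (le_of_lt hδpos))
          (mul_le_mul h3 h2 (abs_nonneg _) hCp0)
      _ = δ * B := by rw [hB_def]; ring
  -- integrability of P * G x
  have hPG_int : ∀ x ∈ X, IntegrableOn (fun θτ => P θτ * G x θτ.1) D := by
    intro x hx
    refine Measure.integrableOn_of_bounded (M := (Cp + 1) * (Cg + 1)) hDfin.ne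
      ((hPm.mul ((hGm.comp (measurable_const.prodMk measurable_fst)))).aestronglyMeasurable)
      ?_
    rw [ae_restrict_iff' hDm]
    refine Filter.Eventually.of_forall (fun θτ hθτ => ?_)
    rw [Real.norm_eq_abs, abs_mul]
    have h1 : |P θτ| ≤ Cp + 1 := by
      calc |P θτ| = |p θτ + (P θτ - p θτ)| := by ring_nf
        _ ≤ |p θτ| + |P θτ - p θτ| := abs_add_le _ _
        _ ≤ Cp + 1 := add_le_add (hCp θτ hθτ) (le_trans (le_of_lt (hPa θτ hθτ)) hδ1)
    have h2 : |G x θτ.1| ≤ Cg + 1 := by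
      calc |G x θτ.1| = |g x θτ.1 + (G x θτ.1 - g x θτ.1)| := by ring_nf
        _ ≤ |g x θτ.1| + |G x θτ.1 - g x θτ.1| := abs_add_le _ _
        _ ≤ Cg + 1 := add_le_add (hCg x hx θτ hθτ)
            (le_trans (le_of_lt (hGa x hx θτ hθτ)) hδ1)
    exact mul_le_mul h1 h2 (abs_nonneg _)
      (add_nonneg hCp0 zero_le_one)
  -- Q close to q
  have hQq : ∀ x ∈ X,
      |(∫ θτ in D, P θτ * G x θτ.1) - ∫ θτ in D, p θτ * g x θτ.1| ≤ δ * B * M := by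
    intro x hx
    have heq : (∫ θτ in D, P θτ * G x θτ.1) - ∫ θτ in D, p θτ * g x θτ.1
        = ∫ θτ in D, (P θτ * G x θτ.1 - p θτ * g x θτ.1) :=
      (integral_sub (hPG_int x hx) (hpg_int x hx)).symm
    rw [heq, ← Real.norm_eq_abs]
    have := norm_setIntegral_le_of_norm_le_const (μ := volume) (s := D)
      (C := δ * B) hDfin
      (fun θτ hθτ => by rw [Real.norm_eq_abs]; exact key x hx θτ hθτ)
    exact this
  have hδBM : δ * B * M ≤ q₀ / 2 := by
    have h1 : δ * (2 * (M + 1) * B) ≤ q₀ := by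
      rw [← le_div_iff₀ (mul_pos (mul_pos two_pos hM1) hBpos)]
      exact hδ2
    nlinarith [mul_pos hδpos hBpos]
  have hQpos : ∀ x ∈ X, q₀ / 2 ≤ ∫ θτ in D, P θτ * G x θτ.1 := by
    intro x hx
    have h1 := hQq x hx
    have h2 := hq₀le x hx
    have h3 := (abs_le.mp h1).1
    linarith
  constructor
  · intro x hx
    exact ne_of_gt (lt_of_lt_of_le (half_pos hq₀pos) (hQpos x hx))
  -- final pointwise estimate
  intro x hx θτ hθτ
  set Qx : ℝ := ∫ u in D, P u * G x u.1 with hQx_def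
  set qx : ℝ := ∫ u in D, p u * g x u.1 with hqx_def
  have hQx : q₀ / 2 ≤ Qx := hQpos x hx
  have hqx : q₀ ≤ qx := hq₀le x hx
  have hQqx : |Qx - qx| ≤ δ * B * M := hQq x hx
  clear_value Qx qx
  have hQ2pos : (0:ℝ) < Qx := lt_of_lt_of_le (half_pos hq₀pos) hQx
  have hq2pos : (0:ℝ) < qx := lt_of_lt_of_le hq₀pos hqx
  have hQne : Qx ≠ 0 := ne_of_gt hQ2pos
  have hqne : qx ≠ 0 := ne_of_gt hq2pos
  have hA : |P θτ * G x θτ.1 - p θτ * g x θτ.1| ≤ δ * B := key x hx θτ hθτ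
  have ha : |p θτ * g x θτ.1| ≤ Cp * Cg := by
    rw [abs_mul]
    exact mul_le_mul (hCp θτ hθτ) (hCg x hx θτ hθτ) (abs_nonneg _) hCp0
  have heq : P θτ * G x θτ.1 / Qx - p θτ * g x θτ.1 / qx
      = (P θτ * G x θτ.1 - p θτ * g x θτ.1) / Qx
        + p θτ * g x θτ.1 * (qx - Qx) / (Qx * qx) := by
    field_simp
    ring
  have habsQ : |Qx| = Qx := abs_of_pos hQ2pos
  have habsq : |qx| = qx := abs_of_pos hq2pos
  have hb1 : |(P θτ * G x θτ.1 - p θτ * g x θτ.1) / Qx| ≤ δ * B / (q₀ / 2) := by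
    rw [abs_div, habsQ]
    exact div_le_div₀ (mul_nonneg hδpos.le hBpos.le) hA (half_pos hq₀pos) hQx
  have hb2 : |p θτ * g x θτ.1 * (qx - Qx) / (Qx * qx)|
      ≤ Cp * Cg * (δ * B * M) / (q₀ / 2 * q₀) := by
    rw [abs_div, abs_mul, abs_mul Qx qx, habsQ, habsq]
    refine div_le_div₀
      (mul_nonneg (mul_nonneg hCp0 hCg0')
        (mul_nonneg (mul_nonneg hδpos.le hBpos.le) hM0)) ?_
      (mul_pos (half_pos hq₀pos) hq₀pos) ?_
    · refine mul_le_mul ha ?_ (abs_nonneg _) (mul_nonneg hCp0 hCg0')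
      rw [abs_sub_comm]
      exact hQqx
    · exact mul_le_mul hQx hqx hq₀pos.le hQ2pos.le
  have hsum : |P θτ * G x θτ.1 / Qx - p θτ * g x θτ.1 / qx|
      ≤ δ * B / (q₀ / 2) + Cp * Cg * (δ * B * M) / (q₀ / 2 * q₀) := by
    rw [heq]
    exact le_trans (abs_add_le _ _) (add_le_add hb1 hb2)
  have hK_eq : δ * B / (q₀ / 2) + Cp * Cg * (δ * B * M) / (q₀ / 2 * q₀)
      = δ * B * K := by
    rw [hK_def]
    field_simp
  have hfinal : δ * B * K < ε := by
    have h1 : δ * (2 * (K + 1) * B) ≤ ε := by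
      rw [← le_div_iff₀ (mul_pos (mul_pos two_pos hK1) hBpos)]
      exact hδ3
    nlinarith [mul_pos hδpos hBpos, mul_pos (mul_pos hδpos hBpos) hKpos]
  calc |P θτ * G x θτ.1 / Qx - p θτ * g x θτ.1 / qx|
      ≤ δ * B / (q₀ / 2) + Cp * Cg * (δ * B * M) / (q₀ / 2 * q₀) := hsum
    _ = δ * B * K := hK_eq
    _ < ε := hfinal
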